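/- Let a₁ ∈ ℝ with a₁ ≠ 0, and ω, φ ∈ ℝ with sin(ω) ≠ 0; set θ_n = ωn + φ. Then lim_{N→∞} (1/N) Σ_{n=1}^{N−1} (a₁(cos θ_{n+1} − cos θ_n))² = a₁²(1 − cos ω). -/

import Mathlib

open Filter

theorem fisher_entry_33_asymptotics
    (a₁ ω φ : ℝ) (ha : a₁ ≠ 0) (hω : Real.sin ω ≠ 0) :
    Tendsto (fun N : ℕ =>
        (1 / (N : ℝ)) *
          ∑ n ∈ Finset.Icc 1 (N - 1),
            (a₁ * (Real.cos (ω * (n + 1) + φ) - Real.cos (ω * n + φ))) ^ 2)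
      atTop (nhds (a₁ ^ 2 * (1 - Real.cos ω))) := by
  set c : ℝ := a₁ ^ 2 * (1 - Real.cos ω) with hc
  have hsa : 0 < |Real.sin ω| := abs_pos.mpr hω
  -- pointwise identity
  have key : ∀ n : ℕ,
      (a₁ * (Real.cos (ω * (n + 1) + φ) - Real.cos (ω * n + φ))) ^ 2
        = c - c * Real.cos (2 * ω * n + 2 * φ + ω) := by
    intro n
    have h1 : ω * ((n:ℝ) + 1) + φ = (ω * n + φ) + ω := by ring
    have h2 : 2 * ω * (n:ℝ) + 2 * φ + ω = (ω * n + φ) + ((ω * n + φ) + ω) := by ring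
    rw [hc, h1, h2, Real.cos_add (ω * n + φ) ((ω * n + φ) + ω),
      Real.cos_add (ω * n + φ) ω, Real.sin_add (ω * n + φ) ω]
    linear_combination (a₁ ^ 2 * Real.sin (ω * n + φ) ^ 2) * Real.sin_sq_add_cos_sq ω
      + (a₁ ^ 2 * (1 - Real.cos ω)) * Real.sin_sq_add_cos_sq (ω * n + φ)
  -- telescoping identity
  have tele : ∀ x : ℝ, Real.cos (x + ω) * (2 * Real.sin ω)
      = Real.sin (x + 2 * ω) - Real.sin x := by
    intro x
    rw [Real.cos_add, show x + 2 * ω = x + (ω + ω) from by ring, Real.sin_add x (ω + ω),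
      Real.sin_add ω ω, Real.cos_add ω ω]
    linear_combination (- Real.sin x) * Real.sin_sq_add_cos_sq ω
  set F : ℕ → ℝ := fun i => Real.sin (2 * ω * i + 2 * φ + 2 * ω) / (2 * Real.sin ω) with hF
  have h2s : (2 : ℝ) * Real.sin ω ≠ 0 := mul_ne_zero two_ne_zero hω
  have hFb : ∀ i : ℕ, |F i| ≤ 1 / (2 * |Real.sin ω|) := by
    intro i
    simp only [hF]
    rw [abs_div, abs_mul, abs_two]
    gcongr
    · exact abs_le.mpr ⟨Real.neg_one_le_sin _, Real.sin_le_one _⟩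
  have hS : ∀ M : ℕ, ∑ n ∈ Finset.Icc 1 M, Real.cos (2 * ω * n + 2 * φ + ω)
      = F M - F 0 := by
    intro M
    rw [show Finset.Icc 1 M = Finset.Ico 1 (M + 1) from (Finset.Ico_add_one_right_eq_Icc 1 M).symm,
      Finset.sum_Ico_eq_sum_range]
    simp only [Nat.add_sub_cancel]
    rw [← Finset.sum_range_sub F M]
    apply Finset.sum_congr rfl
    intro i _
    simp only [hF]
    rw [div_sub_div_same, eq_div_iff h2s]
    push_cast
    rw [show 2 * ω * (1 + (i:ℝ)) + 2 * φ + ω = (2 * ω * i + 2 * φ + 2 * ω) + ω from by ring,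
      show 2 * ω * ((i:ℝ) + 1) + 2 * φ + 2 * ω = (2 * ω * i + 2 * φ + 2 * ω) + 2 * ω from by ring]
    exact tele _
  -- bound on oscillating sum
  have hbound : ∀ M : ℕ, |F M - F 0| ≤ 1 / |Real.sin ω| := by
    intro M
    calc |F M - F 0| ≤ |F M| + |F 0| := abs_sub _ _
    _ ≤ 1 / (2 * |Real.sin ω|) + 1 / (2 * |Real.sin ω|) := add_le_add (hFb M) (hFb 0)
    _ = 1 / |Real.sin ω| := by
      rw [← add_div, div_eq_div_iff (by positivity) (by positivity)]
      ring
  -- sum formula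
  have sum_eq : ∀ N : ℕ, ∑ n ∈ Finset.Icc 1 (N - 1),
      (a₁ * (Real.cos (ω * (n + 1) + φ) - Real.cos (ω * n + φ))) ^ 2
      = c * ((N - 1 : ℕ) : ℝ) - c * (F (N - 1) - F 0) := by
    intro N
    rw [Finset.sum_congr rfl (fun n _ => key n), Finset.sum_sub_distrib,
      Finset.sum_const, ← Finset.mul_sum, hS, Nat.card_Icc]
    simp [nsmul_eq_mul]
    ring
  simp only [sum_eq]
  -- limit pieces
  have hA : Tendsto (fun N : ℕ => ((N - 1 : ℕ) : ℝ) / N) atTop (nhds 1) := by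
    have h1 : Tendsto (fun N : ℕ => 1 - 1 / (N : ℝ)) atTop (nhds 1) := by
      simpa using (tendsto_const_nhds (x := (1:ℝ)) (f := (atTop : Filter ℕ))).sub
        tendsto_one_div_atTop_nhds_zero_nat
    apply h1.congr'
    filter_upwards [eventually_ge_atTop 1] with N hN
    have hN0 : (N : ℝ) ≠ 0 := by positivity
    rw [Nat.cast_sub hN]
    push_cast
    field_simp
  have hB : Tendsto (fun N : ℕ => (F (N - 1) - F 0) * (1 / (N : ℝ))) atTop (nhds 0) := by
    apply squeeze_zero_norm (a := fun N : ℕ => (1 / |Real.sin ω|) * (1 / (N : ℝ)))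
    · intro N
      rw [norm_mul]
      gcongr
      · exact hbound _
      · rw [Real.norm_eq_abs, abs_of_nonneg (by positivity)]
    · simpa using tendsto_one_div_atTop_nhds_zero_nat.const_mul (1 / |Real.sin ω|)
  have hcomb : Tendsto (fun N : ℕ => c * (((N - 1 : ℕ) : ℝ) / N)
      - c * ((F (N - 1) - F 0) * (1 / (N : ℝ)))) atTop (nhds c) := by
    have := (hA.const_mul c).sub (hB.const_mul c)
    simpa [mul_comm] using this
  apply hcomb.congr
  intro N
  ring
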